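/- Let X : [0,∞) × [0,1] → ℝ be continuous such that for every t the function X(t,·) is of the form X(t,z) = ∑_{k ≥ 1} c_k(t) z^k with c_k(t) ≥ 0 and ∑_{k ≥ 1} c_k(t) = 1. For i = 1, 2 let y_i > 0 and let ψ_i : [0, y_i) → (0,1) be continuously differentiable with ψ_i'(t) = ψ_i(t)(1 − X(t, ψ_i(t))) for all t ∈ [0, y_i), and suppose ψ_i(t) → 1 as t ↑ y_i. If y_1 < y_2, then ψ_2(0) < ψ_1(0). -/

import Mathlib

theorem stmt12 (X : ℝ → ℝ → ℝ) (c : ℝ → ℕ → ℝ)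
    (hXc : ContinuousOn (fun p : ℝ × ℝ => X p.1 p.2) (Set.Ici 0 ×ˢ Set.Icc 0 1))
    (hc : ∀ t : ℝ, 0 ≤ t → ∀ k : ℕ, 0 ≤ c t (k + 1))
    (hcs : ∀ t : ℝ, 0 ≤ t → HasSum (fun k => c t (k + 1)) 1)
    (hX : ∀ t : ℝ, 0 ≤ t → ∀ z ∈ Set.Icc (0 : ℝ) 1,
      HasSum (fun k => c t (k + 1) * z ^ (k + 1)) (X t z))
    (y₁ y₂ : ℝ) (hy₁ : 0 < y₁) (hy₂ : 0 < y₂) (ψ₁ ψ₂ : ℝ → ℝ)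
    (hr₁ : ∀ t ∈ Set.Ico (0 : ℝ) y₁, ψ₁ t ∈ Set.Ioo (0 : ℝ) 1)
    (hd₁ : ∀ t ∈ Set.Ico (0 : ℝ) y₁,
      HasDerivWithinAt ψ₁ (ψ₁ t * (1 - X t (ψ₁ t))) (Set.Ico 0 y₁) t)
    (hl₁ : Filter.Tendsto ψ₁ (nhdsWithin y₁ (Set.Iio y₁)) (nhds 1))
    (hr₂ : ∀ t ∈ Set.Ico (0 : ℝ) y₂, ψ₂ t ∈ Set.Ioo (0 : ℝ) 1)
    (hd₂ : ∀ t ∈ Set.Ico (0 : ℝ) y₂,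
      HasDerivWithinAt ψ₂ (ψ₂ t * (1 - X t (ψ₂ t))) (Set.Ico 0 y₂) t)
    (hl₂ : Filter.Tendsto ψ₂ (nhdsWithin y₂ (Set.Iio y₂)) (nhds 1))
    (hlt : y₁ < y₂) : ψ₂ 0 < ψ₁ 0 := by
  by_contra hcon
  push_neg at hcon
  have hsub : Set.Ico (0:ℝ) y₁ ⊆ Set.Ico 0 y₂ := Set.Ico_subset_Ico_right hlt.le
  have Xmono : ∀ t : ℝ, 0 ≤ t → ∀ a b : ℝ, 0 ≤ a → a ≤ b → b ≤ 1 → X t a ≤ X t b := by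
    intro t ht a b ha hab hb1
    refine hasSum_le (fun k => ?_) (hX t ht a ⟨ha, hab.trans hb1⟩) (hX t ht b ⟨ha.trans hab, hb1⟩)
    exact mul_le_mul_of_nonneg_left (pow_le_pow_left₀ ha hab _) (hc t ht k)
  have cont1 : ContinuousOn ψ₁ (Set.Ico 0 y₁) := fun t ht => (hd₁ t ht).continuousWithinAt
  have cont2 : ContinuousOn ψ₂ (Set.Ico 0 y₂) := fun t ht => (hd₂ t ht).continuousWithinAt
  have key : ∀ s ∈ Set.Ico (0:ℝ) y₁, ψ₁ s ≤ ψ₂ s := by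
    intro s hs
    by_contra hgt
    push_neg at hgt
    set u : ℝ → ℝ := fun t => Real.log (ψ₁ t) - Real.log (ψ₂ t) with hu
    have hIccsub : Set.Icc 0 s ⊆ Set.Ico 0 y₁ := fun t ht => ⟨ht.1, ht.2.trans_lt hs.2⟩
    have hucont : ContinuousOn u (Set.Icc 0 s) := by
      apply ContinuousOn.sub
      · exact (cont1.mono hIccsub).log (fun t ht => (hr₁ t (hIccsub ht)).1.ne')
      · exact (cont2.mono (hIccsub.trans hsub)).log
          (fun t ht => (hr₂ t (hsub (hIccsub ht))).1.ne')
    set S := Set.Icc 0 s ∩ u ⁻¹' Set.Iic 0 with hS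
    have hScl : IsClosed S := hucont.preimage_isClosed_of_isClosed isClosed_Icc isClosed_Iic
    have hSsub : S ⊆ Set.Icc 0 s := Set.inter_subset_left
    have hScomp : IsCompact S := isCompact_Icc.of_isClosed_subset hScl hSsub
    have h0S : (0:ℝ) ∈ S := by
      refine ⟨⟨le_refl 0, hs.1⟩, ?_⟩
      simp only [Set.mem_preimage, Set.mem_Iic, hu]
      exact sub_nonpos.2 (Real.log_le_log (hr₁ 0 ⟨le_refl 0, hy₁⟩).1 hcon)
    have hSne : S.Nonempty := ⟨0, h0S⟩
    set t₀ := sSup S with ht₀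
    have hmem : t₀ ∈ S := hScomp.sSup_mem hSne
    have ht₀0 : 0 ≤ t₀ := hmem.1.1
    have ht₀s : t₀ ≤ s := hmem.1.2
    have hψ₂s : 0 < ψ₂ s := (hr₂ s (hsub hs)).1
    have hus : 0 < u s := sub_pos.2 (Real.log_lt_log hψ₂s hgt)
    have ht₀lt : t₀ < s := by
      rcases lt_or_eq_of_le ht₀s with h | h
      · exact h
      · exfalso; have := hmem.2; rw [h] at this
        exact absurd this (not_le.2 hus)
    have hposIoc : ∀ t ∈ Set.Ioc t₀ s, ψ₂ t < ψ₁ t := by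
      intro t ht
      by_contra hle
      push_neg at hle
      have htIcc : t ∈ Set.Icc (0:ℝ) s := ⟨ht₀0.trans ht.1.le, ht.2⟩
      have hut : u t ≤ 0 :=
        sub_nonpos.2 (Real.log_le_log (hr₁ t (hIccsub htIcc)).1 hle)
      have : t ∈ S := ⟨htIcc, hut⟩
      exact absurd (le_csSup hScomp.bddAbove this) (not_le.2 ht.1)
    have hderiv : ∀ x ∈ Set.Ioo t₀ s, HasDerivAt u (X x (ψ₂ x) - X x (ψ₁ x)) x := by
      intro x hx
      have hx1 : x ∈ Set.Ico (0:ℝ) y₁ := ⟨ht₀0.trans hx.1.le, hx.2.trans hs.2⟩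
      have hx2 : x ∈ Set.Ico (0:ℝ) y₂ := hsub hx1
      have hxpos : 0 < x := ht₀0.trans_lt hx.1
      have hn1 : Set.Ico (0:ℝ) y₁ ∈ nhds x := Ico_mem_nhds hxpos hx1.2
      have hn2 : Set.Ico (0:ℝ) y₂ ∈ nhds x := Ico_mem_nhds hxpos hx2.2
      have h1 : HasDerivAt ψ₁ (ψ₁ x * (1 - X x (ψ₁ x))) x := (hd₁ x hx1).hasDerivAt hn1
      have h2 : HasDerivAt ψ₂ (ψ₂ x * (1 - X x (ψ₂ x))) x := (hd₂ x hx2).hasDerivAt hn2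
      have hne1 : ψ₁ x ≠ 0 := (hr₁ x hx1).1.ne'
      have hne2 : ψ₂ x ≠ 0 := (hr₂ x hx2).1.ne'
      have hl1 := h1.log hne1
      have hl2 := h2.log hne2
      have := hl1.sub hl2
      have e : X x (ψ₂ x) - X x (ψ₁ x) =
          ψ₁ x * (1 - X x (ψ₁ x)) / ψ₁ x - ψ₂ x * (1 - X x (ψ₂ x)) / ψ₂ x := by
        rw [mul_comm (ψ₁ x), mul_comm (ψ₂ x), mul_div_assoc, mul_div_assoc,
          div_self hne1, div_self hne2, mul_one, mul_one]
        ring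
      rw [e]; exact this
    have hanti : AntitoneOn u (Set.Icc t₀ s) := by
      apply antitoneOn_of_deriv_nonpos (convex_Icc _ _)
        (hucont.mono (fun t ht => ⟨ht₀0.trans ht.1, ht.2⟩))
      · intro x hx
        rw [interior_Icc] at hx
        exact (hderiv x hx).differentiableAt.differentiableWithinAt
      · intro x hx
        rw [interior_Icc] at hx
        rw [(hderiv x hx).deriv]
        have hx1 : x ∈ Set.Ico (0:ℝ) y₁ := ⟨ht₀0.trans hx.1.le, hx.2.trans hs.2⟩
        have hx2 : x ∈ Set.Ico (0:ℝ) y₂ := hsub hx1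
        have hle : ψ₂ x ≤ ψ₁ x := (hposIoc x ⟨hx.1, hx.2.le⟩).le
        exact sub_nonpos.2 (Xmono x hx1.1 _ _ (hr₂ x hx2).1.le hle (hr₁ x hx1).2.le)
    have := hanti ⟨le_refl t₀, ht₀lt.le⟩ ⟨ht₀lt.le, le_refl s⟩ ht₀lt.le
    exact absurd (this.trans hmem.2) (not_le.2 hus)
  -- Step B: conclude
  have hy₁mem : y₁ ∈ Set.Ico (0:ℝ) y₂ := ⟨hy₁.le, hlt⟩
  have hcont2' : ContinuousWithinAt ψ₂ (Set.Ico 0 y₂) y₁ := (hd₂ y₁ hy₁mem).continuousWithinAt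
  have hten : Filter.Tendsto ψ₂ (nhdsWithin y₁ (Set.Iio y₁)) (nhds (ψ₂ y₁)) := by
    rw [← nhdsWithin_Ioo_eq_nhdsLT hy₁]
    exact hcont2'.tendsto.mono_left
      (nhdsWithin_mono _ (fun t ht => ⟨ht.1.le, ht.2.trans hlt⟩))
  have hev : ∀ᶠ t in nhdsWithin y₁ (Set.Iio y₁), ψ₁ t ≤ ψ₂ t := by
    filter_upwards [Ioo_mem_nhdsLT_of_mem (Set.mem_Ioc.2 ⟨hy₁, le_refl y₁⟩)] with t ht
    exact key t ⟨ht.1.le, ht.2⟩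
  have h1le : (1:ℝ) ≤ ψ₂ y₁ := le_of_tendsto_of_tendsto hl₁ hten hev
  exact absurd (hr₂ y₁ hy₁mem).2 (not_lt.2 h1le)
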